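/- Let n be even, b_0,…,b_n real distinct mod π, a real, B = Σ b_k. Then for z avoiding poles: sin((n+1)z−a)/∏_{k=0}^n sin(z−b_k) = Σ_{k=0}^n sin((n+1)b_k − a) cot(z−b_k) / ∏_{j≠k} sin(b_k−b_j) + (−4)^{n/2} cos(B−a). -/

import Mathlib

open Finset Polynomial

/-- Lagrange interpolation: the top coefficient of a polynomial of degree `< #s`
equals the weighted sum of its values at the nodes. -/
lemma coeff_eq_sum_eval {F ι : Type*} [Field F] [DecidableEq ι] (s : Finset ι) (v : ι → F)
    (hvs : Set.InjOn v s) (f : F[X]) (hf : f.degree < #s) :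
    f.coeff (#s - 1) = ∑ i ∈ s, f.eval (v i) * Lagrange.nodalWeight s v i := by
  conv_lhs => rw [Lagrange.eq_interpolate hvs hf]
  rw [Lagrange.interpolate_apply, finset_sum_coeff]
  refine Finset.sum_congr rfl fun i hi => ?_
  rw [coeff_C_mul, Lagrange.basis_eq_prod_sub_inv_mul_nodal_div hi,
    ← Lagrange.nodal_erase_eq_nodal_div hi, coeff_C_mul]
  have hm : (Lagrange.nodal (s.erase i) v).Monic := Lagrange.nodal_monic
  have hd : (Lagrange.nodal (s.erase i) v).natDegree = #s - 1 := by
    rw [Lagrange.natDegree_nodal, card_erase_of_mem hi]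
  rw [← hd, hm.coeff_natDegree, mul_one, mul_comm]

lemma sum_pow_div (n : ℕ) (e : Fin (n+1) → ℂ) (hed : ∀ j k, j ≠ k → e j ≠ e k) :
    ∑ k, e k ^ n / ∏ j ∈ univ.erase k, (e k - e j) = 1 := by
  have hinj : Set.InjOn e (univ : Finset (Fin (n+1))) := fun j _ k _ h => by
    by_contra hc; exact hed j k hc h
  have h := coeff_eq_sum_eval univ e hinj (X ^ n)
    (by rw [degree_X_pow, card_univ, Fintype.card_fin]; exact_mod_cast Nat.lt_succ_self n)
  rw [card_univ, Fintype.card_fin, Nat.add_sub_cancel, coeff_X_pow, if_pos rfl] at h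
  rw [h]
  refine Finset.sum_congr rfl fun k _ => ?_
  rw [eval_pow, eval_X, Lagrange.nodalWeight, div_eq_mul_inv, prod_inv_distrib]

lemma sum_inv_div (n : ℕ) (e : Fin (n+1) → ℂ) (he0 : ∀ k, e k ≠ 0)
    (hed : ∀ j k, j ≠ k → e j ≠ e k) :
    ∑ k, (e k * ∏ j ∈ univ.erase k, (e k - e j))⁻¹ = (-1:ℂ)^n / ∏ k, e k := by
  classical
  set v : Option (Fin (n+1)) → ℂ := fun o => o.elim 0 e with hv
  have hinj : Set.InjOn v (univ : Finset (Option (Fin (n+1)))) := by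
    rintro (_|j) _ (_|k) _ h
    · rfl
    · exact absurd h.symm (he0 k)
    · exact absurd h (he0 j)
    · by_contra hc
      exact hed j k (fun hjk => hc (by rw [hjk])) h
  have hcard : #(univ : Finset (Option (Fin (n+1)))) = n + 2 := by
    simp [Finset.card_univ]
  have h := coeff_eq_sum_eval univ v hinj 1 (by
    rw [hcard, degree_one]
    exact_mod_cast Nat.succ_pos (n+1))
  rw [hcard, show n+2-1 = n+1 from rfl, coeff_one, if_neg (Nat.succ_ne_zero n)] at h
  rw [Fintype.sum_option] at h
  have hnone : (univ : Finset (Option (Fin (n+1)))).erase none = univ.map Function.Embedding.some := by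
    ext o
    cases o <;> simp
  have hweight_none : Lagrange.nodalWeight univ v none = ((-1:ℂ))^(n+1) * (∏ k, e k)⁻¹ := by
    rw [Lagrange.nodalWeight, hnone, Finset.prod_map]
    simp only [Function.Embedding.some_apply]
    calc (∏ x : Fin (n+1), (v none - v (some x))⁻¹)
        = ∏ x : Fin (n+1), (-1) * (e x)⁻¹ := by
          refine Finset.prod_congr rfl fun k _ => ?_
          show ((0:ℂ) - e k)⁻¹ = _
          rw [zero_sub, inv_neg]; ring
      _ = (-1)^(n+1) * ∏ x, (e x)⁻¹ := by
          rw [Finset.prod_mul_distrib, Finset.prod_const, Finset.card_univ, Fintype.card_fin]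
      _ = (-1)^(n+1) * (∏ k, e k)⁻¹ := by rw [← prod_inv_distrib]
  have herase : ∀ k : Fin (n+1), (univ : Finset (Option (Fin (n+1)))).erase (some k)
      = insert none ((univ.erase k).map Function.Embedding.some) := by
    intro k
    ext o
    cases o <;> simp [eq_comm]
  have hweight_some : ∀ k : Fin (n+1), Lagrange.nodalWeight univ v (some k)
      = (e k)⁻¹ * ∏ j ∈ univ.erase k, (e k - e j)⁻¹ := by
    intro k
    rw [Lagrange.nodalWeight, herase k, Finset.prod_insert (by simp), Finset.prod_map]
    simp only [Function.Embedding.some_apply]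
    show (e k - 0)⁻¹ * _ = _
    rw [sub_zero]
    rfl
  simp only [eval_one, one_mul, hweight_none, hweight_some] at h
  have h2 : ∑ k, (e k)⁻¹ * ∏ j ∈ univ.erase k, (e k - e j)⁻¹
      = -((-1:ℂ)^(n+1) * (∏ k, e k)⁻¹) := by linear_combination -h
  calc ∑ k, (e k * ∏ j ∈ univ.erase k, (e k - e j))⁻¹
      = ∑ k, (e k)⁻¹ * ∏ j ∈ univ.erase k, (e k - e j)⁻¹ := by
        refine Finset.sum_congr rfl fun k _ => ?_
        rw [mul_inv, prod_inv_distrib]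
    _ = -((-1:ℂ)^(n+1) * (∏ k, e k)⁻¹) := h2
    _ = (-1:ℂ)^n / ∏ k, e k := by rw [pow_succ]; ring

lemma key_poly (n : ℕ) (e : Fin (n+1) → ℂ) (he0 : ∀ k, e k ≠ 0)
    (hed : ∀ j k, j ≠ k → e j ≠ e k) (q t : ℂ) :
    2 * (t^(n+1) - q^2)
      = (∑ k, (e k^(n+1) - q^2) / (e k * ∏ j ∈ univ.erase k, (e k - e j))
            * ((t + e k) * ∏ j ∈ univ.erase k, (t - e j)))
        + (1 + (-1:ℂ)^n * q^2 / ∏ k, e k) * ∏ k, (t - e k) := by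
  have hprodne : ∀ k, (∏ j ∈ univ.erase k, (e k - e j)) ≠ 0 := fun k =>
    Finset.prod_ne_zero_iff.mpr fun j hj =>
      sub_ne_zero_of_ne (hed k j fun h => (Finset.mem_erase.mp hj).1 h.symm)
  have hE : (∏ k, e k) ≠ 0 := Finset.prod_ne_zero_iff.mpr fun k _ => he0 k
  set g : Fin (n+1) → ℂ :=
    fun k => (e k^(n+1) - q^2) / (e k * ∏ j ∈ univ.erase k, (e k - e j)) with hg
  set cst : ℂ := 1 + (-1:ℂ)^n * q^2 / ∏ k, e k with hcst
  have hsum_g : ∑ k, g k = 1 - (-1:ℂ)^n * q^2 / ∏ k, e k := by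
    have : ∀ k : Fin (n+1), g k = e k ^ n / ∏ j ∈ univ.erase k, (e k - e j)
        - q^2 * (e k * ∏ j ∈ univ.erase k, (e k - e j))⁻¹ := by
      intro k
      have h1 := he0 k
      have h2 := hprodne k
      rw [hg]
      field_simp
      ring
    rw [Finset.sum_congr rfl fun k _ => this k, Finset.sum_sub_distrib,
      sum_pow_div n e hed, ← Finset.mul_sum, sum_inv_div n e he0 hed]
    ring
  set P : ℂ[X] := C 2 * (X^(n+1) - C (q^2))
      - (∑ k, C (g k) * ((X + C (e k)) * Lagrange.nodal (univ.erase k) e))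
      - C cst * Lagrange.nodal univ e with hP
  have hinj : Set.InjOn e (univ : Finset (Fin (n+1))) := fun j _ k _ h => by
    by_contra hc; exact hed j k hc h
  have hcard : #(univ : Finset (Fin (n+1))) = n + 1 := by simp
  have hterm_monic : ∀ k : Fin (n+1),
      ((X + C (e k)) * Lagrange.nodal (univ.erase k) e).Monic :=
    fun k => (monic_X_add_C _).mul Lagrange.nodal_monic
  have hterm_deg : ∀ k : Fin (n+1),
      ((X + C (e k)) * Lagrange.nodal (univ.erase k) e).natDegree = n + 1 := by
    intro k
    rw [(monic_X_add_C _).natDegree_mul Lagrange.nodal_monic, natDegree_X_add_C,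
      Lagrange.natDegree_nodal, card_erase_of_mem (mem_univ k), hcard]
    omega
  have hnodal_deg : (Lagrange.nodal (univ : Finset (Fin (n+1))) e).natDegree = n + 1 := by
    rw [Lagrange.natDegree_nodal, hcard]
  have hP_le : P.degree ≤ ((n+1 : ℕ) : WithBot ℕ) := by
    rw [hP]
    refine le_trans (degree_sub_le _ _) (max_le (le_trans (degree_sub_le _ _) (max_le ?_ ?_)) ?_)
    · refine le_trans (degree_mul_le _ _) ?_
      refine le_trans (add_le_add degree_C_le degree_le_natDegree) ?_
      rw [natDegree_X_pow_sub_C]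
      simp
    · refine le_trans (degree_sum_le _ _) ?_
      refine Finset.sup_le fun k _ => ?_
      refine le_trans (degree_mul_le _ _) ?_
      refine le_trans (add_le_add degree_C_le (degree_le_natDegree)) ?_
      rw [hterm_deg k]
      simp
    · refine le_trans (degree_mul_le _ _) ?_
      refine le_trans (add_le_add degree_C_le degree_le_natDegree) ?_
      rw [hnodal_deg]
      simp
  have hP_coeff : P.coeff (n+1) = 0 := by
    rw [hP]
    simp only [coeff_sub, coeff_C_mul, finset_sum_coeff, coeff_sub, coeff_X_pow, if_pos rfl,
      coeff_C, if_neg (Nat.succ_ne_zero n), eq_self_iff_true, if_true]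
    have h1 : ∀ k : Fin (n+1),
        ((X + C (e k)) * Lagrange.nodal (univ.erase k) e).coeff (n+1) = 1 := by
      intro k
      have := (hterm_monic k).coeff_natDegree
      rwa [hterm_deg k] at this
    have h2 : (Lagrange.nodal (univ : Finset (Fin (n+1))) e).coeff (n+1) = 1 := by
      have := (Lagrange.nodal_monic (s := (univ : Finset (Fin (n+1)))) (v := e)).coeff_natDegree
      rwa [hnodal_deg] at this
    rw [h2]
    rw [Finset.sum_congr rfl fun k _ => by rw [h1 k]]
    simp only [mul_one]
    rw [hsum_g, hcst]
    ring
  have hP_lt : P.degree < #(univ : Finset (Fin (n+1))) := by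
    rw [hcard]
    rcases lt_or_eq_of_le hP_le with h | h
    · exact_mod_cast h
    · exfalso
      have hne : P ≠ 0 := fun h0 => by
        rw [h0, degree_zero] at h
        exact WithBot.bot_ne_coe h
      have := natDegree_eq_of_degree_eq_some h
      exact leadingCoeff_ne_zero.mpr hne (by rwa [leadingCoeff, this])
  have hP0 : P = 0 := by
    refine eq_zero_of_degree_lt_of_eval_index_eq_zero (v := e) (univ : Finset (Fin (n+1))) hinj hP_lt ?_
    intro m _
    rw [hP]
    simp only [eval_sub, eval_mul, eval_C, eval_add, eval_pow, eval_X, eval_finset_sum,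
      Lagrange.eval_nodal]
    have hnodal0 : (∏ j, (e m - e j)) = 0 :=
      Finset.prod_eq_zero (mem_univ m) (sub_self _)
    have hsum : ∑ k, g k * ((e m + e k) * ∏ j ∈ univ.erase k, (e m - e j))
        = 2 * (e m^(n+1) - q^2) := by
      rw [Finset.sum_eq_single m]
      · have h1 := he0 m
        have h2 := hprodne m
        rw [hg]
        field_simp
        ring
      · intro k _ hk
        have : (∏ j ∈ univ.erase k, (e m - e j)) = 0 :=
          Finset.prod_eq_zero (Finset.mem_erase.mpr ⟨hk.symm, mem_univ m⟩) (sub_self _)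
        rw [this]
        ring
      · intro h; exact absurd (mem_univ m) h
    rw [hsum, hnodal0]
    ring
  have := congrArg (eval t) hP0
  rw [hP] at this
  simp only [eval_sub, eval_mul, eval_C, eval_add, eval_pow, eval_X, eval_finset_sum,
    Lagrange.eval_nodal, eval_zero] at this
  rw [hcst] at this
  linear_combination this

lemma sin_exp_eq (x y : ℂ) : Complex.sin (x - y)
    = ((Complex.exp (Complex.I*x))^2 - (Complex.exp (Complex.I*y))^2)
      / (2 * Complex.I * Complex.exp (Complex.I*x) * Complex.exp (Complex.I*y)) := by
  rw [Complex.sin, show -(x-y)*Complex.I = Complex.I*y - Complex.I*x by ring,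
    show (x-y)*Complex.I = Complex.I*x - Complex.I*y by ring, Complex.exp_sub, Complex.exp_sub]
  have h1 := Complex.exp_ne_zero (Complex.I*x)
  have h2 := Complex.exp_ne_zero (Complex.I*y)
  field_simp
  ring_nf
  rw [Complex.I_sq]
  ring

lemma cos_exp_eq (x y : ℂ) : Complex.cos (x - y)
    = ((Complex.exp (Complex.I*x))^2 + (Complex.exp (Complex.I*y))^2)
      / (2 * Complex.exp (Complex.I*x) * Complex.exp (Complex.I*y)) := by
  rw [Complex.cos, show -(x-y)*Complex.I = Complex.I*y - Complex.I*x by ring,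
    show (x-y)*Complex.I = Complex.I*x - Complex.I*y by ring, Complex.exp_sub, Complex.exp_sub]
  have h1 := Complex.exp_ne_zero (Complex.I*x)
  have h2 := Complex.exp_ne_zero (Complex.I*y)
  field_simp

lemma exp_nat_succ_mul (n : ℕ) (x : ℂ) :
    Complex.exp (Complex.I * (((n:ℂ)+1) * x)) = Complex.exp (Complex.I * x) ^ (n+1) := by
  rw [show Complex.I * (((n:ℂ)+1)*x) = ((n+1 : ℕ) : ℂ) * (Complex.I * x) by push_cast; ring,
    Complex.exp_nat_mul]

lemma cot_exp_eq (x y : ℂ)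
    (h : Complex.exp (Complex.I*x)^2 - Complex.exp (Complex.I*y)^2 ≠ 0) :
    Complex.cot (x - y) = Complex.I * (Complex.exp (Complex.I*x)^2 + Complex.exp (Complex.I*y)^2)
      / (Complex.exp (Complex.I*x)^2 - Complex.exp (Complex.I*y)^2) := by
  rw [Complex.cot, cos_exp_eq, sin_exp_eq]
  have h1 := Complex.exp_ne_zero (Complex.I*x)
  have h2 := Complex.exp_ne_zero (Complex.I*y)
  have hI := Complex.I_ne_zero
  field_simp

lemma sin_mul_exp (n : ℕ) (x y : ℂ) : Complex.sin (((n:ℂ)+1)*x - y)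
    = ((Complex.exp (Complex.I*x)^2)^(n+1) - Complex.exp (Complex.I*y)^2)
      / (2 * Complex.I * Complex.exp (Complex.I*x)^(n+1) * Complex.exp (Complex.I*y)) := by
  rw [sin_exp_eq, exp_nat_succ_mul, ← pow_mul, ← pow_mul, mul_comm 2 (n+1)]

lemma final_helper (n : ℕ) (I w q βP PT t : ℂ) (hI : I ≠ 0) (hw : w ≠ 0) (hq : q ≠ 0)
    (hβP : βP ≠ 0) (hPT : PT ≠ 0) :
    (t^(n+1) - q^2)/(2*I*w^(n+1)*q) / (PT/((2*I*w)^(n+1)*βP))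
      = (2*I)^n*βP/(2*q) * (2*(t^(n+1)-q^2) - (1+q^2/βP^2)*PT) / PT
        + (2*I)^n*((βP^2+q^2)/(2*βP*q)) := by
  have hAne : ((2*I : ℂ))^n ≠ 0 := pow_ne_zero _ (by simp [hI])
  have hWne : (w:ℂ)^n ≠ 0 := pow_ne_zero _ hw
  rw [mul_pow (2*I) w, pow_succ (2*I) n, pow_succ w n, pow_succ t n]
  generalize hA : ((2*I : ℂ))^n = A at hAne ⊢
  generalize hWW : (w:ℂ)^n = W at hWne ⊢
  generalize t^n = T
  have h2q : (2*q : ℂ) ≠ 0 := by simp [hq]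
  have hβP2 : (βP^2 : ℂ) ≠ 0 := pow_ne_zero _ hβP
  have h2βPq : (2*βP*q : ℂ) ≠ 0 := by simp [hq, hβP]
  rw [div_div_eq_mul_div, div_mul_eq_mul_div, div_div]
  rw [one_add_div hβP2, div_mul_eq_mul_div (βP^2+q^2) (βP^2) PT, sub_div' hβP2,
    div_mul_div_comm, mul_div_assoc', div_div,
    div_add_div _ _ (by exact mul_ne_zero (mul_ne_zero h2q hβP2) hPT) h2βPq,
    div_eq_div_iff
      (by exact mul_ne_zero (mul_ne_zero (mul_ne_zero (mul_ne_zero two_ne_zero hI)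
        (mul_ne_zero hWne hw)) hq) hPT)
      (by exact mul_ne_zero (mul_ne_zero (mul_ne_zero h2q hβP2) hPT) h2βPq)]
  ring

lemma term_helper (n : ℕ) (I β q t E PE PT βP : ℂ) (hI : I ≠ 0) (hβ : β ≠ 0) (hq : q ≠ 0)
    (htE : t - E ≠ 0) (hPE : PE ≠ 0) (hPT : PT ≠ 0) (hE : E = β^2) :
    (E^(n+1) - q^2)/(2*I*β^(n+1)*q) * (I*(t+E)/(t-E)) / (PE/((2*I*β)^n*(βP/β)))
      = (2*I)^n*βP/(2*q) * ((E^(n+1)-q^2)/(E*PE) * ((t+E)*PT)) / ((t-E)*PT) := by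
  have hAne : ((2*I : ℂ))^n ≠ 0 := pow_ne_zero _ (by simp [hI])
  have hBne : (β:ℂ)^n ≠ 0 := pow_ne_zero _ hβ
  have hEne : E ≠ 0 := by rw [hE]; exact pow_ne_zero _ hβ
  rw [mul_pow (2*I) β, pow_succ E n, pow_succ β n]
  generalize hA : ((2*I : ℂ))^n = A at hAne ⊢
  generalize hBB : (β:ℂ)^n = Bn at hBne ⊢
  generalize hEE : (E:ℂ)^n = En
  rw [div_mul_div_comm, mul_div_assoc' (A*Bn) βP β, div_div_eq_mul_div,
    div_mul_eq_mul_div, div_div, mul_div_assoc', div_div]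
  rw [div_mul_eq_mul_div (En*E - q^2) (E*PE) ((t+E)*PT), div_mul_div_comm, div_div]
  rw [div_eq_div_iff
    (mul_ne_zero hβ (mul_ne_zero (mul_ne_zero (mul_ne_zero (mul_ne_zero
      (mul_ne_zero two_ne_zero hI) (mul_ne_zero hBne hβ)) hq) htE) hPE))
    (mul_ne_zero (mul_ne_zero (mul_ne_zero two_ne_zero hq) (mul_ne_zero hEne hPE))
      (mul_ne_zero htE hPT))]
  subst hE
  ring

theorem cot_expansion_even (n : ℕ) (hn : Even n) (b : Fin (n + 1) → ℝ)
    (hb : ∀ j k, j ≠ k → Real.sin (b j - b k) ≠ 0)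
    (a : ℝ) (B : ℝ) (hB : B = ∑ k, b k)
    (z : ℂ) (hz : ∀ k, Complex.sin (z - (b k : ℂ)) ≠ 0) :
    Complex.sin (((n : ℂ) + 1) * z - (a : ℂ)) / ∏ k, Complex.sin (z - (b k : ℂ))
      = (∑ k, Complex.sin (((n : ℂ) + 1) * (b k : ℂ) - (a : ℂ)) *
            Complex.cot (z - (b k : ℂ)) /
            ∏ j ∈ univ.erase k, Complex.sin ((b k : ℂ) - (b j : ℂ)))
        + (-4 : ℂ) ^ (n / 2) * Complex.cos ((B : ℂ) - (a : ℂ)) := by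
  set I : ℂ := Complex.I with hI
  have hIne : I ≠ 0 := Complex.I_ne_zero
  set w : ℂ := Complex.exp (I * z) with hw
  set β : Fin (n+1) → ℂ := fun k => Complex.exp (I * (b k : ℂ)) with hβ
  set q : ℂ := Complex.exp (I * (a : ℂ)) with hq
  set t : ℂ := w ^ 2 with ht
  set e : Fin (n+1) → ℂ := fun k => β k ^ 2 with he
  set βP : ℂ := ∏ k, β k with hβP
  have hwne : w ≠ 0 := Complex.exp_ne_zero _
  have hβne : ∀ k, β k ≠ 0 := fun k => Complex.exp_ne_zero _
  have hqne : q ≠ 0 := Complex.exp_ne_zero _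
  have hβPne : βP ≠ 0 := Finset.prod_ne_zero_iff.mpr fun k _ => hβne k
  have he0 : ∀ k, e k ≠ 0 := fun k => pow_ne_zero _ (hβne k)
  have hsin_zb : ∀ k, Complex.sin (z - (b k : ℂ)) = (t - e k) / (2*I*w*β k) := fun k =>
    sin_exp_eq z (b k : ℂ)
  have hsin_bb : ∀ k j, Complex.sin ((b k : ℂ) - (b j : ℂ)) = (e k - e j) / (2*I*β k*β j) :=
    fun k j => sin_exp_eq _ _
  have hed : ∀ j k, j ≠ k → e j ≠ e k := by
    intro j k hjk heq
    apply hb j k hjk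
    have h0 : Complex.sin ((b j : ℂ) - (b k : ℂ)) = 0 := by
      rw [hsin_bb j k, heq, sub_self, zero_div]
    have h2 : ((Real.sin (b j - b k) : ℝ) : ℂ) = 0 := by
      rw [Complex.ofReal_sin]; push_cast; exact h0
    exact_mod_cast h2
  have hprodne : ∀ k, (∏ j ∈ univ.erase k, (e k - e j)) ≠ 0 := fun k =>
    Finset.prod_ne_zero_iff.mpr fun j hj =>
      sub_ne_zero_of_ne (hed k j fun h => (Finset.mem_erase.mp hj).1 h.symm)
  have htne : ∀ k, t - e k ≠ 0 := by
    intro k h0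
    exact hz k (by rw [hsin_zb k, h0, zero_div])
  have hprodtne : (∏ k, (t - e k)) ≠ 0 := Finset.prod_ne_zero_iff.mpr fun k _ => htne k
  have hprodtne' : ∀ k, (∏ j ∈ univ.erase k, (t - e j)) ≠ 0 := fun k =>
    Finset.prod_ne_zero_iff.mpr fun j _ => htne j
  have hcot : ∀ k, Complex.cot (z - (b k : ℂ)) = I * (t + e k) / (t - e k) := fun k =>
    cot_exp_eq z (b k : ℂ) (htne k)
  have htop : Complex.sin (((n:ℂ)+1)*z - (a:ℂ)) = (t^(n+1) - q^2)/(2*I*w^(n+1)*q) :=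
    sin_mul_exp n z (a : ℂ)
  have hσ : ∀ k, Complex.sin (((n:ℂ)+1)*(b k : ℂ) - (a:ℂ))
      = ((e k)^(n+1) - q^2)/(2*I*(β k)^(n+1)*q) := fun k => sin_mul_exp n (b k : ℂ) (a : ℂ)
  have hβerase : ∀ k, ∏ j ∈ univ.erase k, β j = βP / β k := by
    intro k
    rw [eq_div_iff (hβne k), Finset.prod_erase_mul univ β (Finset.mem_univ k)]
  have hprod_sin : ∏ k, Complex.sin (z - (b k : ℂ))
      = (∏ k, (t - e k)) / ((2*I*w)^(n+1) * βP) := by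
    rw [Finset.prod_congr rfl fun k _ => hsin_zb k, Finset.prod_div_distrib,
      Finset.prod_mul_distrib, Finset.prod_const, Finset.card_univ, Fintype.card_fin]
  have hSprod : ∀ k, (∏ j ∈ univ.erase k, Complex.sin ((b k : ℂ) - (b j : ℂ)))
      = (∏ j ∈ univ.erase k, (e k - e j)) / ((2*I*β k)^n * (βP / β k)) := by
    intro k
    rw [Finset.prod_congr rfl fun j _ => hsin_bb k j, Finset.prod_div_distrib,
      Finset.prod_mul_distrib, Finset.prod_const, Finset.card_erase_of_mem (Finset.mem_univ k),
      Finset.card_univ, Fintype.card_fin, Nat.add_sub_cancel, hβerase k]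
  have hexpB : Complex.exp (I * (B:ℂ)) = βP := by
    rw [hB, hβP]
    push_cast
    rw [Finset.mul_sum, Complex.exp_sum]
  have hcos_Ba : Complex.cos ((B:ℂ) - (a:ℂ)) = (βP^2 + q^2)/(2*βP*q) := by
    have h := cos_exp_eq (B:ℂ) (a:ℂ)
    rw [← hI, ← hq, hexpB] at h
    exact h
  have hc4 : ((-4 : ℂ))^(n/2) = (2*I)^n := by
    obtain ⟨m, hm⟩ := hn
    subst hm
    have h2 : m + m = 2*m := by ring
    have hI2 : ((2*I : ℂ))^2 = -4 := by
      rw [mul_pow, hI, Complex.I_sq]; norm_num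
    rw [h2, Nat.mul_div_cancel_left m (by norm_num), pow_mul, hI2]
  have hsplit : ∀ k, ∏ j, (t - e j) = (t - e k) * ∏ j ∈ univ.erase k, (t - e j) := fun k =>
    (Finset.mul_prod_erase univ _ (Finset.mem_univ k)).symm
  rw [htop, hprod_sin, hc4, hcos_Ba]
  rw [Finset.sum_congr rfl fun k _ => by rw [hσ k, hcot k, hSprod k]]
  have hterm : ∀ k : Fin (n+1),
      ((e k)^(n+1) - q^2)/(2*I*(β k)^(n+1)*q) * (I * (t + e k) / (t - e k))
        / ((∏ j ∈ univ.erase k, (e k - e j)) / ((2*I*β k)^n * (βP / β k)))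
      = (2*I)^n*βP/(2*q) *
          ((e k^(n+1) - q^2) / (e k * ∏ j ∈ univ.erase k, (e k - e j))
            * ((t + e k) * ∏ j ∈ univ.erase k, (t - e j))) / ∏ j, (t - e j) := by
    intro k
    rw [hsplit k]
    exact term_helper n I (β k) q t (e k) _ _ βP hIne (hβne k) hqne (htne k)
      (hprodne k) (hprodtne' k) rfl
  rw [Finset.sum_congr rfl fun k _ => hterm k, ← Finset.sum_div, ← Finset.mul_sum]
  have hkey := key_poly n e he0 hed q t
  rw [Even.neg_one_pow hn, show (∏ k, e k) = βP^2 by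
    rw [hβP, ← Finset.prod_pow]] at hkey
  have hkey' : (∑ k, (e k^(n+1) - q^2) / (e k * ∏ j ∈ univ.erase k, (e k - e j))
        * ((t + e k) * ∏ j ∈ univ.erase k, (t - e j)))
      = 2*(t^(n+1) - q^2) - (1 + q^2/βP^2) * ∏ k, (t - e k) := by
    rw [one_mul] at hkey
    linear_combination -hkey
  rw [hkey']
  exact final_helper n I w q βP (∏ k, (t - e k)) t hIne hwne hqne hβPne hprodtne
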